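/- arXiv:1503.03047 — 4 statements merged into one kernel-verified Lean document; each statement's English description precedes it below -/
import Mathlib

section
/- Let P = P̄ + ΔP where P̄ ∈ ℝ^{m×m} is a row-stochastic matrix, ΔP ∈ ℝ^{m×m} has zero row sums, and W_1, ..., W_m are square matrices of equal size. Set α_r = ‖W_r ⊗ W_r‖_∞. If for every column index s, Σ_{r=1}^m α_r |Δp_{rs}| < 1 − Σ_{r=1}^m α_r p̄_{rs}, then ρ((Pᵀ ⊗ I) diag(W_j ⊗ W_j)) < 1. -/
open Matrix Kronecker

/-- Maximum absolute row sum (infinity) norm of a matrix. -/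
noncomputable def infNorm {m n : Type*} [Fintype m] [Fintype n] (A : Matrix m n ℝ) : ℝ :=
  ⨆ i, ∑ j, |A i j|

/-- Spectral radius of a real square matrix: largest modulus of a complex eigenvalue
(root of the characteristic polynomial over ℂ). -/
noncomputable def specRad {n : Type*} [Fintype n] [DecidableEq n] (A : Matrix n n ℝ) : ℝ :=
  sSup {r : ℝ | ∃ μ : ℂ, (A.map (algebraMap ℝ ℂ)).charpoly.IsRoot μ ∧ r = ‖μ‖}

/-- A matrix is row-stochastic if its entries are nonnegative and each row sums to `1`. -/
def RowStochastic {m : Type*} [Fintype m] (P : Matrix m m ℝ) : Prop :=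
  (∀ i j, 0 ≤ P i j) ∧ ∀ i, ∑ j, P i j = 1

/-- The matrix `(Pᵀ ⊗ I) diag(W_j ⊗ W_j)`: its `(s, r)` block is `p_{rs} (W_r ⊗ W_r)`. -/
noncomputable def bigM {m n : ℕ} (P : Matrix (Fin m) (Fin m) ℝ)
    (W : Fin m → Matrix (Fin n) (Fin n) ℝ) :
    Matrix (Fin m × (Fin n × Fin n)) (Fin m × (Fin n × Fin n)) ℝ :=
  Matrix.of fun p q => P q.1 p.1 * (W q.1 ⊗ₖ W q.1) p.2 q.2

/-- Gershgorin-type bound: any root of the characteristic polynomial has modulus at most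
some absolute row sum. -/
lemma eig_row_bound {ι : Type*} [Fintype ι] [DecidableEq ι] [Nonempty ι]
    (B : Matrix ι ι ℂ) (μ : ℂ) (hroot : B.charpoly.IsRoot μ) :
    ∃ i, ‖μ‖ ≤ ∑ j, ‖B i j‖ := by
  have hdet : ((charmatrix B).map (Polynomial.evalRingHom μ)).det = 0 := by
    have := (RingHom.map_det (Polynomial.evalRingHom μ) (charmatrix B)).symm
    simp only [RingHom.mapMatrix_apply] at this
    rw [this]
    exact hroot
  have hEq : (charmatrix B).map (Polynomial.evalRingHom μ) = μ • (1 : Matrix ι ι ℂ) - B := by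
    ext i j
    by_cases hij : i = j <;>
      simp [hij, Matrix.map_apply, charmatrix_apply, Matrix.diagonal_apply, Matrix.one_apply,
        Matrix.sub_apply, Matrix.smul_apply]
  rw [hEq] at hdet
  obtain ⟨v, hv0, hv⟩ := Matrix.exists_mulVec_eq_zero_iff.2 hdet
  have hBv : B.mulVec v = μ • v := by
    rw [Matrix.sub_mulVec, Matrix.smul_mulVec, Matrix.one_mulVec, sub_eq_zero] at hv
    exact hv.symm
  obtain ⟨i, -, hi⟩ := Finset.exists_max_image Finset.univ (fun i => ‖v i‖)
    ⟨Classical.arbitrary ι, Finset.mem_univ _⟩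
  have hvi : 0 < ‖v i‖ := by
    obtain ⟨j, hj⟩ := Function.ne_iff.1 hv0
    exact lt_of_lt_of_le (by simpa using hj) (hi j (Finset.mem_univ j))
  refine ⟨i, ?_⟩
  have key : ‖μ‖ * ‖v i‖
      ≤ (∑ j, ‖B i j‖) * ‖v i‖ := by
    calc ‖μ‖ * ‖v i‖ = ‖(μ • v) i‖ := by
          simp
      _ = ‖(B.mulVec v) i‖ := by rw [hBv]
      _ = ‖∑ j, B i j * v j‖ := by rw [Matrix.mulVec, dotProduct]
      _ ≤ ∑ j, ‖B i j * v j‖ := norm_sum_le _ _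
      _ = ∑ j, ‖B i j‖ * ‖v j‖ := by simp [norm_mul]
      _ ≤ ∑ j, ‖B i j‖ * ‖v i‖ :=
          Finset.sum_le_sum fun j _ =>
            mul_le_mul_of_nonneg_left (hi j (Finset.mem_univ j)) (norm_nonneg _)
      _ = (∑ j, ‖B i j‖) * ‖v i‖ := (Finset.sum_mul _ _ _).symm
  exact le_of_mul_le_mul_right key hvi

lemma specRad_lt_one {ι : Type*} [Fintype ι] [DecidableEq ι]
    (A : Matrix ι ι ℝ) (h : ∀ i, ∑ j, |A i j| < 1) : specRad A < 1 := by
  cases isEmpty_or_nonempty ι with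
  | inl hE =>
      have : {r : ℝ | ∃ μ : ℂ, (A.map (algebraMap ℝ ℂ)).charpoly.IsRoot μ ∧
          r = ‖μ‖} = ∅ := by
        ext r
        simp [Matrix.charpoly, Matrix.det_isEmpty, Polynomial.IsRoot]
      rw [specRad, this, Real.sSup_empty]
      norm_num
  | inr hN =>
      set c : ℝ := Finset.univ.sup' Finset.univ_nonempty (fun i => ∑ j, |A i j|) with hc
      have hc1 : c < 1 := (Finset.sup'_lt_iff Finset.univ_nonempty).2 fun i _ => h i
      have hc0 : 0 ≤ c := le_trans
        (Finset.sum_nonneg fun j _ => abs_nonneg _)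
        (Finset.le_sup' (fun i => ∑ j, |A i j|) (Finset.mem_univ (Classical.arbitrary ι)))
      have hsle : specRad A ≤ c := by
        apply Real.sSup_le _ hc0
        rintro r ⟨μ, hroot, rfl⟩
        obtain ⟨i, hi⟩ := eig_row_bound (A.map (algebraMap ℝ ℂ)) μ hroot
        refine le_trans ?_ (Finset.le_sup' (fun i => ∑ j, |A i j|) (Finset.mem_univ i))
        refine le_trans hi (le_of_eq ?_)
        simp [Matrix.map_apply, Complex.norm_real]
      exact lt_of_le_of_lt hsle hc1

/-- If `P = P̄ + ΔP`, with `P̄` row-stochastic, `ΔP` having zero row sums, and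
`Σ_r α_r |Δp_{rs}| < 1 − Σ_r α_r p̄_{rs}` for all `s` where `α_r = ‖W_r ⊗ W_r‖_∞`,
then `ρ((Pᵀ ⊗ I) diag(W_j ⊗ W_j)) < 1`. -/
theorem stmt4 {m n : ℕ} (Pbar ΔP : Matrix (Fin m) (Fin m) ℝ)
    (W : Fin m → Matrix (Fin n) (Fin n) ℝ)
    (hPbar : RowStochastic Pbar)
    (hΔ : ∀ r, ∑ s, ΔP r s = 0)
    (h : ∀ s, ∑ r, infNorm (W r ⊗ₖ W r) * |ΔP r s|
        < 1 - ∑ r, infNorm (W r ⊗ₖ W r) * Pbar r s) :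
    specRad (bigM (Pbar + ΔP) W) < 1 := by
  apply specRad_lt_one
  intro p
  obtain ⟨s, ij⟩ := p
  have key : ∑ q : Fin m × (Fin n × Fin n), |bigM (Pbar + ΔP) W (s, ij) q|
      ≤ ∑ r, (Pbar r s + |ΔP r s|) * infNorm (W r ⊗ₖ W r) := by
    rw [Fintype.sum_prod_type]
    refine Finset.sum_le_sum fun r _ => ?_
    have hsum : (∑ kl, |bigM (Pbar + ΔP) W (s, ij) (r, kl)|)
        = |(Pbar + ΔP) r s| * ∑ kl, |(W r ⊗ₖ W r) ij kl| := by
      rw [Finset.mul_sum]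
      refine Finset.sum_congr rfl fun kl _ => ?_
      simp [bigM, abs_mul]
    rw [hsum]
    have hS0 : 0 ≤ ∑ kl, |(W r ⊗ₖ W r) ij kl| :=
      Finset.sum_nonneg fun kl _ => abs_nonneg _
    have hSle : (∑ kl, |(W r ⊗ₖ W r) ij kl|) ≤ infNorm (W r ⊗ₖ W r) := by
      apply le_ciSup (f := fun i => ∑ kl, |(W r ⊗ₖ W r) i kl|)
        (Set.Finite.bddAbove (Set.finite_range _)) ij
    have habs : |(Pbar + ΔP) r s| ≤ Pbar r s + |ΔP r s| := by
      calc |(Pbar + ΔP) r s| = |Pbar r s + ΔP r s| := by simp [Matrix.add_apply]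
        _ ≤ |Pbar r s| + |ΔP r s| := abs_add_le _ _
        _ = Pbar r s + |ΔP r s| := by rw [abs_of_nonneg (hPbar.1 r s)]
    exact mul_le_mul habs hSle hS0 (add_nonneg (hPbar.1 r s) (abs_nonneg _))
  have hsplit : ∑ r, (Pbar r s + |ΔP r s|) * infNorm (W r ⊗ₖ W r)
      = (∑ r, infNorm (W r ⊗ₖ W r) * Pbar r s) + ∑ r, infNorm (W r ⊗ₖ W r) * |ΔP r s| := by
    rw [← Finset.sum_add_distrib]
    refine Finset.sum_congr rfl fun r _ => ?_
    ring
  have := h s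
  calc ∑ q : Fin m × (Fin n × Fin n), |bigM (Pbar + ΔP) W (s, ij) q|
      ≤ ∑ r, (Pbar r s + |ΔP r s|) * infNorm (W r ⊗ₖ W r) := key
    _ = (∑ r, infNorm (W r ⊗ₖ W r) * Pbar r s) + ∑ r, infNorm (W r ⊗ₖ W r) * |ΔP r s| := hsplit
    _ < 1 := by linarith
end

section
/- Consider the scalar Markov jump linear system x(k+1) = a_{σ(k)} x(k) with a_1 = 1/2, a_2 = 5/4, and two-state Markov transition matrix P with rows (p_{11}, 1−p_{11}) and (p_{21}, 1−p_{21}). With nominal P̄ having rows (0.4, 0.6) and (0.5, 0.5), if |p_{11} − 0.4| ≤ 0.4 and |p_{21} − 0.5| ≤ 0.02, then ρ((Pᵀ ⊗ I) diag(a_j²)) ≤ 1, i.e., the spectral radius of the 2×2 matrix with entries M_{sr} = p_{rs} a_r² is at most 1. -/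
open Matrix

open Polynomial in
lemma charpoly_two (A : Matrix (Fin 2) (Fin 2) ℂ) :
    A.charpoly = (X - C (A 0 0)) * (X - C (A 1 1)) - C (A 0 1) * C (A 1 0) := by
  rw [Matrix.charpoly, Matrix.det_fin_two]
  simp [charmatrix_apply_eq, charmatrix_apply_ne]

set_option maxHeartbeats 400000 in
/-- For the scalar two-mode MJLS with `a₁ = 1/2`, `a₂ = 5/4`, nominal transition matrix
with rows `(0.4, 0.6)`, `(0.5, 0.5)`, and perturbations `|p₁₁ − 0.4| ≤ 0.4`,
`|p₂₁ − 0.5| ≤ 0.02`, the 2×2 matrix `M` with `M_{sr} = p_{rs} a_r²` (i.e.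
`(Pᵀ ⊗ I) diag(a_j²)`) has spectral radius at most `1`. -/
theorem stmt13 (p11 p21 : ℝ)
    (h11 : 0 ≤ p11) (h11' : p11 ≤ 1) (h21 : 0 ≤ p21) (h21' : p21 ≤ 1)
    (hb1 : |p11 - 0.4| ≤ 0.4) (hb2 : |p21 - 0.5| ≤ 0.02) :
    specRad !![p11 * ((1 : ℝ)/2)^2, p21 * ((5 : ℝ)/4)^2;
               (1 - p11) * ((1 : ℝ)/2)^2, (1 - p21) * ((5 : ℝ)/4)^2] ≤ 1 := by
  rw [abs_le] at hb1 hb2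
  obtain ⟨hx1, hx2⟩ := hb1
  obtain ⟨hy1, hy2⟩ := hb2
  apply Real.sSup_le _ zero_le_one
  rintro r ⟨μ, hroot, rfl⟩
  set a : ℝ := p11 * ((1:ℝ)/2)^2 with ha
  set b : ℝ := p21 * ((5:ℝ)/4)^2 with hb
  set c : ℝ := (1 - p11) * ((1:ℝ)/2)^2 with hc
  set d : ℝ := (1 - p21) * ((5:ℝ)/4)^2 with hd
  have hroot' : (μ - (a:ℂ)) * (μ - (d:ℂ)) - (b:ℂ) * (c:ℂ) = 0 := by
    have := hroot
    rw [charpoly_two] at this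
    simpa [Polynomial.IsRoot, Matrix.map_apply] using this
  set u : ℝ := μ.re with hu
  set v : ℝ := μ.im with hv
  have hRe : (u - a) * (u - d) - v * v - b * c = 0 := by
    have := congrArg Complex.re hroot'
    simpa [Complex.mul_re, Complex.sub_re, Complex.sub_im] using this
  have hIm : (u - a) * v + v * (u - d) = 0 := by
    have := congrArg Complex.im hroot'
    simpa [Complex.mul_im, Complex.sub_re, Complex.sub_im] using this
  have hbc : 0 ≤ b * c := by
    apply mul_nonneg <;> nlinarith
  have hv0 : v = 0 := by
    have hm : v * (2 * u - a - d) = 0 := by linear_combination hIm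
    rcases mul_eq_zero.1 hm with h | h
    · exact h
    · have h4 : 4 * (v * v) = (2*u - a - d)^2 - (a - d)^2 - 4*(b*c) := by
        linear_combination -4 * hRe
      rw [h, ] at h4
      have hvv : v * v = 0 := by nlinarith [mul_self_nonneg v, sq_nonneg (a - d)]
      exact mul_self_eq_zero.1 hvv
  rw [hv0] at hRe
  -- χ(1) ≥ 0 and χ(-1) ≥ 0 with linear forms
  have hchi1 : (1 - a) * (1 - d) - b * c = (9*p11 + 75*p21 - 36)/64 := by
    simp only [ha, hb, hc, hd]; ring
  have hchim1 : (1 + a) * (1 + d) - b * c = (164 + 41*p11 - 125*p21)/64 := by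
    simp only [ha, hb, hc, hd]; ring
  have had : a + d ≤ 1.0125 := by simp only [ha, hd]; nlinarith
  have had' : 0 ≤ a + d := by simp only [ha, hd]; nlinarith
  have hub : u ≤ 1 := by
    by_contra h
    push_neg at h
    have hdec : (u - a) * (u - d) - b * c
        = ((1 - a) * (1 - d) - b * c) + (u - 1) * (u + 1 - (a + d)) := by ring
    have hprod : 0 < (u - 1) * (u + 1 - (a + d)) :=
      mul_pos (by linarith) (by linarith)
    have h0 : (u - a) * (u - d) - b * c = 0 := by linear_combination hRe
    rw [h0, hchi1] at hdec
    linarith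
  have hlb : -1 ≤ u := by
    by_contra h
    push_neg at h
    have hdec : (u - a) * (u - d) - b * c
        = ((1 + a) * (1 + d) - b * c) + (u + 1) * (u - 1 - (a + d)) := by ring
    have hprod : 0 < (u + 1) * (u - 1 - (a + d)) :=
      mul_pos_of_neg_of_neg (by linarith) (by linarith)
    rw [hchim1] at hdec
    have h0 : (u - a) * (u - d) - b * c = 0 := by linear_combination hRe
    rw [h0] at hdec
    linarith
  have habs : ‖μ‖ ^ 2 = u * u + v * v := by
    rw [Complex.sq_norm]; rfl
  by_contra hgoal
  push_neg at hgoal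
  nlinarith [habs, hv0, norm_nonneg μ]
end

section
/- If P ∈ ℝ^{m×m} is row-stochastic and each W_j satisfies ‖W_j ⊗ W_j‖_∞ < 1 (equivalently ‖W_j‖_∞² < 1), then ρ((Pᵀ ⊗ I) diag(W_j ⊗ W_j)) < 1. -/
open Matrix Kronecker

/-- Evaluating the characteristic polynomial gives the characteristic determinant. -/
lemma myEvalCharpoly {ι : Type*} [Fintype ι] [DecidableEq ι] {K : Type*} [Field K]
    (M : Matrix ι ι K) (μ : K) : M.charpoly.eval μ = (μ • (1 : Matrix ι ι K) - M).det := by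
  rw [Matrix.charpoly, ← Polynomial.coe_evalRingHom, RingHom.map_det]
  congr 1
  ext i j
  by_cases h : i = j <;>
    simp [h, charmatrix_apply, Matrix.diagonal_apply, Matrix.one_apply, Matrix.smul_apply]

/-- If `P` is row-stochastic and `‖W_j ⊗ W_j‖_∞ < 1` for every `j`, then
`ρ((Pᵀ ⊗ I) diag(W_j ⊗ W_j)) < 1`. -/
theorem stmt14 {m n : ℕ} (P : Matrix (Fin m) (Fin m) ℝ)
    (W : Fin m → Matrix (Fin n) (Fin n) ℝ) (hP : RowStochastic P)
    (hW : ∀ j, infNorm (W j ⊗ₖ W j) < 1) :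
    specRad (bigM P W) < 1 := by
  obtain ⟨hPnn, hProw⟩ := hP
  rcases Nat.eq_zero_or_pos m with hm | hm
  · subst hm
    have : {r : ℝ | ∃ μ : ℂ, ((bigM P W).map (algebraMap ℝ ℂ)).charpoly.IsRoot μ ∧
        r = ‖μ‖} = ∅ := by
      ext r
      simp only [Set.mem_setOf_eq, Set.mem_empty_iff_false, iff_false, not_exists]
      rintro μ ⟨hroot, -⟩
      have h1 : ((bigM P W).map (algebraMap ℝ ℂ)).charpoly = 1 := by
        rw [Matrix.charpoly, Matrix.det_isEmpty]
      rw [h1] at hroot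
      simp [Polynomial.IsRoot] at hroot
    rw [specRad, this, Real.sSup_empty]
    norm_num
  · haveI : NeZero m := ⟨hm.ne'⟩
    set c : ℝ := Finset.univ.sup' Finset.univ_nonempty
      (fun j : Fin m => max (infNorm (W j ⊗ₖ W j)) 0) with hc
    have hc1 : c < 1 := by
      rw [hc, Finset.sup'_lt_iff]
      intro j _
      exact max_lt (hW j) one_pos
    have hc0 : 0 ≤ c :=
      le_trans (le_max_right (infNorm (W 0 ⊗ₖ W 0)) 0)
        (Finset.le_sup' (fun j : Fin m => max (infNorm (W j ⊗ₖ W j)) 0)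
          (Finset.mem_univ (0 : Fin m)))
    refine lt_of_le_of_lt (Real.sSup_le ?_ hc0) hc1
    rintro r ⟨μ, hroot, rfl⟩
    set A : Matrix (Fin m × (Fin n × Fin n)) (Fin m × (Fin n × Fin n)) ℂ :=
      (bigM P W).map (algebraMap ℝ ℂ) with hA
    have hdet : (μ • (1 : Matrix _ _ ℂ) - A).det = 0 := by
      rw [← myEvalCharpoly]; exact hroot
    obtain ⟨v, hv0, hveq⟩ := (Matrix.exists_mulVec_eq_zero_iff).mpr hdet
    have heig : ∀ p, ∑ q, A p q * v q = μ * v p := by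
      intro p
      have := congrFun hveq p
      simp only [Matrix.sub_mulVec, Matrix.smul_mulVec, Matrix.one_mulVec,
        Pi.sub_apply, Pi.smul_apply, Pi.zero_apply, smul_eq_mul, sub_eq_zero] at this
      simpa [Matrix.mulVec, dotProduct] using this.symm
    obtain ⟨p0, hp0⟩ := Function.ne_iff.mp hv0
    haveI : Nonempty (Fin n × Fin n) := ⟨p0.2⟩
    set u : Fin m → ℝ := fun j => Finset.univ.sup' Finset.univ_nonempty
      (fun l : Fin n × Fin n => ‖v (j, l)‖) with hu
    have hu_ge : ∀ j l, ‖v (j, l)‖ ≤ u j := fun j l =>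
      Finset.le_sup' (fun l : Fin n × Fin n => ‖v (j, l)‖) (Finset.mem_univ l)
    have hu_nonneg : ∀ j, 0 ≤ u j := fun j =>
      le_trans (norm_nonneg _) (hu_ge j (Classical.arbitrary _))
    have hrowsum : ∀ j (k : Fin n × Fin n), ∑ l, |(W j ⊗ₖ W j) k l| ≤ c := by
      intro j k
      have hle : ∑ l, |(W j ⊗ₖ W j) k l| ≤ infNorm (W j ⊗ₖ W j) := by
        have := le_ciSup (f := fun i : Fin n × Fin n => ∑ l, |(W j ⊗ₖ W j) i l|)
          (Set.Finite.bddAbove (Set.finite_range _)) k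
        simpa [infNorm] using this
      calc ∑ l, |(W j ⊗ₖ W j) k l| ≤ infNorm (W j ⊗ₖ W j) := hle
        _ ≤ max (infNorm (W j ⊗ₖ W j)) 0 := le_max_left _ _
        _ ≤ c := Finset.le_sup' (fun j : Fin m => max (infNorm (W j ⊗ₖ W j)) 0)
            (Finset.mem_univ j)
    have hkey : ∀ r, ‖μ‖ * u r ≤ c * ∑ j, P j r * u j := by
      intro r
      obtain ⟨k, -, hk⟩ := Finset.exists_mem_eq_sup' (Finset.univ_nonempty)
        (fun l : Fin n × Fin n => ‖v (r, l)‖)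
      have step1 : ‖μ‖ * u r = ‖∑ q, A (r, k) q * v q‖ := by
        have hur : u r = ‖v (r, k)‖ := hk
        rw [heig (r, k), norm_mul, hur]
      have step2 : ‖∑ q, A (r, k) q * v q‖ ≤
          ∑ q : Fin m × (Fin n × Fin n), |bigM P W (r, k) q| * ‖v q‖ := by
        refine le_trans (norm_sum_le _ _) (le_of_eq ?_)
        refine Finset.sum_congr rfl fun q _ => ?_
        rw [hA]
        simp [Matrix.map_apply, _root_.map_mul, Complex.norm_real]
      have step3 : ∑ q : Fin m × (Fin n × Fin n), |bigM P W (r, k) q| * ‖v q‖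
          ≤ ∑ j, (P j r * c) * u j := by
        rw [Fintype.sum_prod_type]
        refine Finset.sum_le_sum fun j _ => ?_
        have h1 : ∀ l : Fin n × Fin n,
            |bigM P W (r, k) (j, l)| * ‖v (j, l)‖ ≤
              (P j r * |(W j ⊗ₖ W j) k l|) * u j := by
          intro l
          have : |bigM P W (r, k) (j, l)| = P j r * |(W j ⊗ₖ W j) k l| := by
            simp only [bigM, Matrix.of_apply, abs_mul, abs_of_nonneg (hPnn j r)]
          rw [this]
          exact mul_le_mul_of_nonneg_left (hu_ge j l)
            (mul_nonneg (hPnn j r) (abs_nonneg _))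
        calc ∑ l, |bigM P W (r, k) (j, l)| * ‖v (j, l)‖
            ≤ ∑ l, (P j r * |(W j ⊗ₖ W j) k l|) * u j := Finset.sum_le_sum fun l _ => h1 l
          _ = P j r * (∑ l, |(W j ⊗ₖ W j) k l|) * u j := by
              rw [Finset.mul_sum, Finset.sum_mul]
          _ ≤ (P j r * c) * u j := by
              apply mul_le_mul_of_nonneg_right _ (hu_nonneg j)
              exact mul_le_mul_of_nonneg_left (hrowsum j k) (hPnn j r)
      calc ‖μ‖ * u r ≤ ∑ j, (P j r * c) * u j :=
            step1 ▸ le_trans step2 step3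
        _ = c * ∑ j, P j r * u j := by
            rw [Finset.mul_sum]
            exact Finset.sum_congr rfl fun j _ => by ring
    -- sum over r
    have hsum : ‖μ‖ * ∑ r, u r ≤ c * ∑ r, u r := by
      calc ‖μ‖ * ∑ r, u r = ∑ r, ‖μ‖ * u r := Finset.mul_sum _ _ _
        _ ≤ ∑ r, c * ∑ j, P j r * u j := Finset.sum_le_sum fun r _ => hkey r
        _ = c * ∑ j, (∑ r, P j r) * u j := by
            rw [← Finset.mul_sum]
            congr 1
            rw [Finset.sum_comm]
            exact Finset.sum_congr rfl fun j _ => by rw [Finset.sum_mul]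
        _ = c * ∑ r, u r := by
            congr 1
            exact Finset.sum_congr rfl fun j _ => by rw [hProw j, one_mul]
    have hT : 0 < ∑ r, u r := by
      have hp0' : v p0 ≠ 0 := by simpa using hp0
      have h1 : 0 < u p0.1 := lt_of_lt_of_le (norm_pos_iff.mpr hp0') (by
          have := hu_ge p0.1 p0.2
          simpa using this)
      exact lt_of_lt_of_le h1 (Finset.single_le_sum (fun j _ => hu_nonneg j)
        (Finset.mem_univ p0.1))
    exact le_of_mul_le_mul_right (by simpa [mul_comm] using hsum) hT
end

section
/- Let M be the nm²×nm² matrix (Pᵀ ⊗ I_{n²}) diag(W_j ⊗ W_j) where P is m×m row-stochastic and W_j ∈ ℝ^{n×n}. If ρ(M) < 1, then for the Markov jump linear system x(k+1) = W_{σ(k)} x(k) driven by a Markov chain with transition matrix P and any initial distribution, E[‖x(k)‖²] → 0 as k → ∞ for every deterministic initial state x(0). -/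
open Matrix Kronecker Filter

/-- Product of mode matrices along a path: `prodW W k q = W_{q(k-1)} ⋯ W_{q(1)} W_{q(0)}`,
so that `x(k) = prodW W k q • x(0)` for the system `x(k+1) = W_{σ(k)} x(k)` along path `q`. -/
def prodW {m n : ℕ} (W : Fin m → Matrix (Fin n) (Fin n) ℝ) :
    (k : ℕ) → (Fin (k + 1) → Fin m) → Matrix (Fin n) (Fin n) ℝ
  | 0, _ => 1
  | k + 1, q => W (q (Fin.last k).castSucc) * prodW W k (fun i => q i.castSucc)

/-- Probability of a mode path of the Markov chain with initial distribution `π₀`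
and transition matrix `P`. -/
def pathProb {m : ℕ} (P : Matrix (Fin m) (Fin m) ℝ) (π₀ : Fin m → ℝ) {k : ℕ}
    (q : Fin (k + 1) → Fin m) : ℝ :=
  π₀ (q 0) * ∏ i : Fin k, P (q i.castSucc) (q i.succ)

section Analytic

attribute [local instance] Matrix.linftyOpNormedRing Matrix.linftyOpNormedAlgebra

variable {ι : Type*} [Fintype ι] [DecidableEq ι]

lemma my_isRoot_of_mem_spectrum (B : Matrix ι ι ℂ) {μ : ℂ} (h : μ ∈ spectrum ℂ B) :
    B.charpoly.IsRoot μ := by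
  have h1 : ¬ IsUnit (algebraMap ℂ (Matrix ι ι ℂ) μ - B) := spectrum.mem_iff.mp h
  rw [Matrix.isUnit_iff_isUnit_det, isUnit_iff_ne_zero, not_not] at h1
  have h2 : B.charpoly.eval μ = (algebraMap ℂ (Matrix ι ι ℂ) μ - B).det := by
    rw [Matrix.charpoly, ← Polynomial.coe_evalRingHom, RingHom.map_det]
    congr 1
    ext i j
    by_cases hij : i = j <;>
      simp [hij, Matrix.charmatrix_apply, Matrix.algebraMap_eq_diagonal,
        Matrix.diagonal_apply, Matrix.sub_apply]
  exact h2.trans h1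

lemma my_entry_tendsto (A : Matrix ι ι ℝ) (h : specRad A < 1) (p q : ι) :
    Tendsto (fun k => (A ^ k) p q) atTop (nhds 0) := by
  set B : Matrix ι ι ℂ := A.map (algebraMap ℝ ℂ) with hB
  -- spectral radius bound
  have hspec : spectralRadius ℂ B < 1 := by
    have hle : spectralRadius ℂ B ≤ ENNReal.ofReal (specRad A) := by
      rw [spectralRadius]
      refine iSup₂_le fun μ hμ => ?_
      have hroot : B.charpoly.IsRoot μ := my_isRoot_of_mem_spectrum B hμ
      have hne : B.charpoly ≠ 0 := (Matrix.charpoly_monic B).ne_zero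
      -- the set of root moduli is finite
      set S : Set ℝ := {r : ℝ | ∃ ν : ℂ, (A.map (algebraMap ℝ ℂ)).charpoly.IsRoot ν ∧
          r = ‖ν‖} with hS
      have hfin : S.Finite := by
        have : S ⊆ (fun z : ℂ => ‖z‖) '' (B.charpoly.roots.toFinset : Set ℂ) := by
          rintro r ⟨ν, hν, rfl⟩
          exact ⟨ν, by rw [Finset.mem_coe, Multiset.mem_toFinset, Polynomial.mem_roots hne]; exact hν, rfl⟩
        exact Set.Finite.subset (Set.Finite.image _ (Multiset.toFinset _).finite_toSet) this
      have hmem : ‖μ‖ ∈ S := ⟨μ, hroot, rfl⟩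
      have habs : ‖μ‖ ≤ specRad A := le_csSup hfin.bddAbove hmem
      calc (‖μ‖₊ : ENNReal) = ENNReal.ofReal ‖μ‖ := by
            rw [← ENNReal.ofReal_coe_nnreal, coe_nnnorm]
        _ ≤ ENNReal.ofReal (specRad A) := ENNReal.ofReal_le_ofReal habs
    calc spectralRadius ℂ B ≤ ENNReal.ofReal (specRad A) := hle
      _ < ENNReal.ofReal 1 := (ENNReal.ofReal_lt_ofReal_iff one_pos).mpr h
      _ = 1 := ENNReal.ofReal_one
  -- Gelfand
  obtain ⟨c, hc1, hc2⟩ := ENNReal.lt_iff_exists_nnreal_btwn.mp hspec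
  have hgel := spectrum.pow_nnnorm_pow_one_div_tendsto_nhds_spectralRadius B
  have hev : ∀ᶠ k : ℕ in atTop, ((‖B ^ k‖₊ : ENNReal)) ^ (1 / (k : ℝ)) < (c : ENNReal) :=
    hgel.eventually_lt_const hc1
  have hev2 : ∀ᶠ k : ℕ in atTop, ‖B ^ k‖ ≤ (c : ℝ) ^ k := by
    filter_upwards [hev, eventually_ge_atTop 1] with k hk hk1
    have hk0 : (k : ℝ) ≠ 0 := Nat.cast_ne_zero.mpr (by omega)
    have e1 : (((‖B ^ k‖₊ : ENNReal)) ^ (1 / (k : ℝ))) ^ k = ((‖B ^ k‖₊ : ENNReal)) := by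
      rw [← ENNReal.rpow_natCast _ k, ← ENNReal.rpow_mul, one_div,
        inv_mul_cancel₀ hk0, ENNReal.rpow_one]
    have hlt : ((‖B ^ k‖₊ : ENNReal)) < ((c : ENNReal)) ^ k := by
      rw [← e1]
      exact ENNReal.pow_lt_pow_left (by omega) hk
    rw [← ENNReal.coe_pow, ENNReal.coe_lt_coe] at hlt
    exact_mod_cast hlt.le
  have hnorm0 : Tendsto (fun k => ‖B ^ k‖) atTop (nhds 0) := by
    refine squeeze_zero' (Eventually.of_forall fun k => norm_nonneg _) hev2 ?_
    exact tendsto_pow_atTop_nhds_zero_of_lt_one c.2 (by exact_mod_cast hc2)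
  -- entry bound
  have hentry : ∀ k, |(A ^ k) p q| ≤ ‖B ^ k‖ := by
    intro k
    have hmap : B ^ k = (A ^ k).map (algebraMap ℝ ℂ) := by
      simp only [hB, ← RingHom.mapMatrix_apply, map_pow]
    have h1 : |(A ^ k) p q| = ‖(B ^ k) p q‖ := by
      rw [hmap]; simp [Matrix.map_apply, Complex.norm_real, Real.norm_eq_abs]
    have h2 : ‖(B ^ k) p q‖₊ ≤ ‖B ^ k‖₊ := by
      rw [Matrix.linfty_opNNNorm_def]
      calc ‖(B ^ k) p q‖₊ ≤ ∑ j, ‖(B ^ k) p j‖₊ :=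
            Finset.single_le_sum (f := fun j => ‖(B ^ k) p j‖₊) (fun j _ => zero_le) (Finset.mem_univ q)
        _ ≤ _ := Finset.le_sup (f := fun i => ∑ j, ‖(B ^ k) i j‖₊) (Finset.mem_univ p)
    rw [h1]
    exact_mod_cast h2
  exact squeeze_zero_norm (fun k => by simpa [Real.norm_eq_abs] using hentry k) hnorm0

end Analytic

noncomputable def Fvec {m n : ℕ} (P : Matrix (Fin m) (Fin m) ℝ) (π₀ : Fin m → ℝ)
    (W : Fin m → Matrix (Fin n) (Fin n) ℝ) (x0 : Fin n → ℝ) (k : ℕ) :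
    Fin m × (Fin n × Fin n) → ℝ :=
  fun p => ∑ q : Fin (k + 1) → Fin m,
    (if q (Fin.last k) = p.1 then
      pathProb P π₀ q *
        ((prodW W k q).mulVec x0 p.2.1 * (prodW W k q).mulVec x0 p.2.2) else 0)

lemma pathProb_snoc {m k : ℕ} (P : Matrix (Fin m) (Fin m) ℝ) (π₀ : Fin m → ℝ)
    (q : Fin (k + 1) → Fin m) (r : Fin m) :
    pathProb P π₀ (Fin.snoc q r) = pathProb P π₀ q * P (q (Fin.last k)) r := by
  unfold pathProb
  rw [Fin.prod_univ_castSucc]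
  have h0 : (Fin.snoc q r : Fin (k + 2) → Fin m) 0 = q 0 := by
    have : (0 : Fin (k + 2)) = (0 : Fin (k + 1)).castSucc := by simp
    rw [this, Fin.snoc_castSucc]
  have hlast : (Fin.snoc q r : Fin (k + 2) → Fin m) (Fin.last k).castSucc = q (Fin.last k) :=
    Fin.snoc_castSucc ..
  have hsucc : (Fin.snoc q r : Fin (k + 2) → Fin m) (Fin.last k).succ = r := by
    rw [Fin.succ_last, Fin.snoc_last]
  rw [h0, hlast, hsucc]
  have hprod : ∀ i : Fin k,
      P ((Fin.snoc q r : Fin (k + 2) → Fin m) i.castSucc.castSucc)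
        ((Fin.snoc q r : Fin (k + 2) → Fin m) i.castSucc.succ)
      = P (q i.castSucc) (q i.succ) := by
    intro i
    rw [Fin.snoc_castSucc, Fin.succ_castSucc, Fin.snoc_castSucc]
  rw [Finset.prod_congr rfl fun i _ => hprod i, mul_assoc]

lemma prodW_snoc {m n k : ℕ} (W : Fin m → Matrix (Fin n) (Fin n) ℝ)
    (q : Fin (k + 1) → Fin m) (r : Fin m) :
    prodW W (k + 1) (Fin.snoc q r) = W (q (Fin.last k)) * prodW W k q := by
  show W ((Fin.snoc q r : Fin (k + 2) → Fin m) (Fin.last k).castSucc) *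
      prodW W k (fun i => (Fin.snoc q r : Fin (k + 2) → Fin m) i.castSucc) = _
  have harg : (fun i : Fin (k + 1) => (Fin.snoc q r : Fin (k + 2) → Fin m) i.castSucc) = q :=
    funext fun i => Fin.snoc_castSucc ..
  rw [Fin.snoc_castSucc, harg]

lemma Fvec_succ {m n : ℕ} (P : Matrix (Fin m) (Fin m) ℝ) (π₀ : Fin m → ℝ)
    (W : Fin m → Matrix (Fin n) (Fin n) ℝ) (x0 : Fin n → ℝ) (k : ℕ) :
    Fvec P π₀ W x0 (k + 1) = (bigM P W).mulVec (Fvec P π₀ W x0 k) := by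
  funext p
  obtain ⟨s, a, b⟩ := p
  have hL : Fvec P π₀ W x0 (k + 1) (s, a, b)
      = ∑ q : Fin (k + 1) → Fin m, pathProb P π₀ q * P (q (Fin.last k)) s *
          ((W (q (Fin.last k)) * prodW W k q).mulVec x0 a *
            (W (q (Fin.last k)) * prodW W k q).mulVec x0 b) := by
    unfold Fvec
    rw [← Fintype.sum_equiv (Fin.snocEquiv (fun _ : Fin (k + 2) => Fin m))
      (fun rq => if (Fin.snoc rq.2 rq.1 : Fin (k + 2) → Fin m) (Fin.last (k + 1)) = s then
        pathProb P π₀ (Fin.snoc rq.2 rq.1) *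
          ((prodW W (k + 1) (Fin.snoc rq.2 rq.1)).mulVec x0 a *
            (prodW W (k + 1) (Fin.snoc rq.2 rq.1)).mulVec x0 b) else 0)
      _ (fun rq => rfl)]
    rw [Fintype.sum_prod_type_right]
    refine Finset.sum_congr rfl fun q _ => ?_
    simp only [Fin.snoc_last, Finset.sum_ite_eq', Finset.mem_univ, if_true]
    rw [pathProb_snoc, prodW_snoc]
  rw [hL]
  have step : ∀ r : Fin m,
      (∑ ab : Fin n × Fin n, bigM P W (s, a, b) (r, ab) * Fvec P π₀ W x0 k (r, ab))
      = ∑ q : Fin (k + 1) → Fin m, (if q (Fin.last k) = r then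
          ∑ a' : Fin n, ∑ b' : Fin n,
            P r s * (W r a a' * W r b b') *
              (pathProb P π₀ q *
                ((prodW W k q).mulVec x0 a' * (prodW W k q).mulVec x0 b')) else 0) := by
    intro r
    rw [Fintype.sum_prod_type]
    have e1 : ∀ a' b' : Fin n,
        bigM P W (s, a, b) (r, (a', b')) * Fvec P π₀ W x0 k (r, (a', b'))
        = ∑ q : Fin (k + 1) → Fin m, (if q (Fin.last k) = r then
            P r s * (W r a a' * W r b b') *
              (pathProb P π₀ q *
                ((prodW W k q).mulVec x0 a' * (prodW W k q).mulVec x0 b')) else 0) := by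
      intro a' b'
      show (P r s * (W r ⊗ₖ W r) (a, b) (a', b')) * Fvec P π₀ W x0 k (r, (a', b')) = _
      unfold Fvec
      rw [Finset.mul_sum]
      refine Finset.sum_congr rfl fun q _ => ?_
      by_cases h : q (Fin.last k) = r
      · simp only [h, if_true, Matrix.kroneckerMap_apply]
        try ring
      · simp [h]
    simp only [e1]
    rw [Finset.sum_congr rfl fun a' (_ : a' ∈ Finset.univ) => Finset.sum_comm]
    rw [Finset.sum_comm]
    refine Finset.sum_congr rfl fun q _ => ?_
    by_cases h : q (Fin.last k) = r
    · simp only [h, if_true]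
      try exact Finset.sum_congr rfl fun a' _ => Finset.sum_comm
    · simp [h]
  symm
  show ∑ rp : Fin m × (Fin n × Fin n),
      bigM P W (s, a, b) rp * Fvec P π₀ W x0 k rp = _
  rw [Fintype.sum_prod_type]
  rw [Finset.sum_congr rfl fun r (_ : r ∈ Finset.univ) => step r]
  rw [Finset.sum_comm]
  refine Finset.sum_congr rfl fun q _ => ?_
  rw [Finset.sum_ite_eq Finset.univ (q (Fin.last k))]
  simp only [Finset.mem_univ, if_true]
  have hmv : ∀ (c : Fin n) (y : Fin n → ℝ),
      (W (q (Fin.last k))).mulVec y c = ∑ c' : Fin n, W (q (Fin.last k)) c c' * y c' := by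
    intro c y
    simp [Matrix.mulVec, dotProduct]
  rw [← Matrix.mulVec_mulVec, hmv a, hmv b, Finset.sum_mul_sum,
    Finset.mul_sum]
  refine Finset.sum_congr rfl fun a' _ => ?_
  rw [Finset.mul_sum]
  refine Finset.sum_congr rfl fun b' _ => ?_
  ring

lemma Fvec_eq {m n : ℕ} (P : Matrix (Fin m) (Fin m) ℝ) (π₀ : Fin m → ℝ)
    (W : Fin m → Matrix (Fin n) (Fin n) ℝ) (x0 : Fin n → ℝ) (k : ℕ) :
    Fvec P π₀ W x0 k = ((bigM P W) ^ k).mulVec (Fvec P π₀ W x0 0) := by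
  induction k with
  | zero => rw [pow_zero, Matrix.one_mulVec]
  | succ k ih => rw [Fvec_succ, ih, Matrix.mulVec_mulVec, ← pow_succ']

lemma target_eq {m n : ℕ} (P : Matrix (Fin m) (Fin m) ℝ) (π₀ : Fin m → ℝ)
    (W : Fin m → Matrix (Fin n) (Fin n) ℝ) (x0 : Fin n → ℝ) (k : ℕ) :
    ∑ q : Fin (k + 1) → Fin m,
        pathProb P π₀ q * ∑ a, ((prodW W k q).mulVec x0 a) ^ 2
      = ∑ s : Fin m, ∑ a : Fin n, Fvec P π₀ W x0 k (s, (a, a)) := by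
  unfold Fvec
  rw [Finset.sum_comm]
  rw [Finset.sum_congr rfl fun a (_ : a ∈ Finset.univ) => Finset.sum_comm]
  rw [Finset.sum_comm]
  refine Finset.sum_congr rfl fun q _ => ?_
  rw [Finset.mul_sum]
  refine Finset.sum_congr rfl fun a _ => ?_
  rw [Finset.sum_ite_eq Finset.univ (q (Fin.last k))]
  simp [pow_two]

/-- If `ρ((Pᵀ ⊗ I) diag(W_j ⊗ W_j)) < 1`, then the Markov jump linear system
`x(k+1) = W_{σ(k)} x(k)` is mean square stable: for any initial distribution `π₀` and any
deterministic initial state `x0`, `E[‖x(k)‖²] → 0`, the expectation being written as a sum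
over mode paths. -/
theorem stmt17 {m n : ℕ} (P : Matrix (Fin m) (Fin m) ℝ) (π₀ : Fin m → ℝ)
    (W : Fin m → Matrix (Fin n) (Fin n) ℝ)
    (hP : RowStochastic P) (hπ₀ : (∀ s, 0 ≤ π₀ s) ∧ ∑ s, π₀ s = 1)
    (hρ : specRad (bigM P W) < 1) :
    ∀ x0 : Fin n → ℝ,
      Tendsto (fun k => ∑ q : Fin (k + 1) → Fin m,
          pathProb P π₀ q * ∑ a, ((prodW W k q).mulVec x0 a) ^ 2)
        atTop (nhds 0) := by
  intro x0
  have hfun : ∀ k : ℕ,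
      (∑ q : Fin (k + 1) → Fin m,
        pathProb P π₀ q * ∑ a, ((prodW W k q).mulVec x0 a) ^ 2)
      = ∑ s : Fin m, ∑ a : Fin n,
          ∑ rp : Fin m × (Fin n × Fin n),
            ((bigM P W) ^ k) (s, (a, a)) rp * Fvec P π₀ W x0 0 rp := by
    intro k
    rw [target_eq]
    refine Finset.sum_congr rfl fun s _ => Finset.sum_congr rfl fun a _ => ?_
    rw [Fvec_eq]
    rfl
  simp only [hfun]
  have h0 : (0 : ℝ) = ∑ _s : Fin m, ∑ _a : Fin n,
      ∑ _rp : Fin m × (Fin n × Fin n), (0 : ℝ) := by simp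
  rw [h0]
  refine tendsto_finset_sum _ fun s _ => tendsto_finset_sum _ fun a _ =>
    tendsto_finset_sum _ fun rp _ => ?_
  simpa using (my_entry_tendsto (bigM P W) hρ (s, (a, a)) rp).mul_const
    (Fvec P π₀ W x0 0 rp)
end
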